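/- For d = 2 the probability that two independent collectors of 2 coupons finish simultaneously equals 1/3, and for d = 3 it equals 11/70. -/

import Mathlib

/-- Stirling numbers of the second kind. -/
def stirling : ℕ → ℕ → ℕ
  | 0, 0 => 1
  | 0, _ + 1 => 0
  | _ + 1, 0 => 0
  | n + 1, k + 1 => (k + 1) * stirling n (k + 1) + stirling n k

/-- `p n d = d! S(n-1,d-1)/d^n`, the probability of first completion at draw `n`. -/
noncomputable def p (n d : ℕ) : ℝ :=
  (Nat.factorial d : ℝ) * (stirling (n - 1) (d - 1) : ℝ) / (d : ℝ) ^ n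

lemma stirling_one (n : ℕ) : stirling (n + 1) 1 = 1 := by
  induction n with
  | zero => rfl
  | succ n ih =>
    show 1 * stirling (n + 1) 1 + stirling (n + 1) 0 = 1
    rw [ih]
    rfl

lemma stirling_two (n : ℕ) : (stirling (n + 1) 2 : ℝ) = 2 ^ n - 1 := by
  induction n with
  | zero => norm_num [stirling]
  | succ n ih =>
    show ((2 * stirling (n + 1) 2 + stirling (n + 1) 1 : ℕ) : ℝ) = _
    push_cast
    rw [ih, stirling_one]
    push_cast
    ring

lemma p2 (n : ℕ) : p (n + 2) 2 ^ 2 = (1/4 : ℝ) * (1/4) ^ n := by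
  simp only [p]
  norm_num [stirling_one]
  rw [div_pow]
  have h : ((2:ℝ) ^ (n + 2)) ^ 2 = 16 * 4 ^ n := by
    rw [← pow_mul, show (n + 2) * 2 = 2 * n + 4 by ring, pow_add, pow_mul]
    norm_num
    ring
  rw [h]
  have h4 : (4:ℝ) ^ n ≠ 0 := by positivity
  field_simp
  rw [mul_assoc, ← mul_pow]
  norm_num

lemma p3 (n : ℕ) : p (n + 2) 3 ^ 2 =
    (4/9 : ℝ) * (4/9) ^ n - (8/9) * (2/9) ^ n + (4/9) * (1/9) ^ n := by
  simp only [p]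
  norm_num [stirling_two]
  rw [div_pow]
  have h : ((3:ℝ) ^ (n + 2)) ^ 2 = 81 * 9 ^ n := by
    rw [← pow_mul, show (n + 2) * 2 = 2 * n + 4 by ring, pow_add, pow_mul]
    norm_num
    ring
  rw [h]
  have h9 : (9:ℝ) ^ n ≠ 0 := by positivity
  have h4 : (4:ℝ) ^ n = 2 ^ n * 2 ^ n := by
    rw [show (4:ℝ) = 2 * 2 by norm_num, mul_pow]
  rw [div_pow, div_pow, div_pow, h4]
  have h6 : (Nat.factorial 3 : ℝ) = 6 := by norm_num [Nat.factorial]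
  field_simp
  ring

theorem simultaneous_completion_values :
    (∑' n : ℕ, p (n + 1) 2 ^ 2) = 1 / 3 ∧ (∑' n : ℕ, p (n + 1) 3 ^ 2) = 11 / 70 := by
  constructor
  · have hs : Summable (fun n : ℕ => p (n + 1 + 1) 2 ^ 2) := by
      simp only [p2]
      exact (summable_geometric_of_lt_one (by norm_num) (by norm_num)).mul_left _
    have hs' : Summable (fun n : ℕ => p (n + 1) 2 ^ 2) :=
      (summable_nat_add_iff 1).mp hs
    rw [Summable.tsum_eq_zero_add hs']
    have h0 : p 1 2 ^ 2 = 0 := by simp [p, stirling]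
    rw [h0, zero_add]
    calc ∑' n : ℕ, p (n + 1 + 1) 2 ^ 2 = ∑' n : ℕ, (1/4 : ℝ) * (1/4) ^ n := by
          exact tsum_congr fun n => p2 n
      _ = (1/4) * (1 - 1/4)⁻¹ := by
          rw [tsum_mul_left, tsum_geometric_of_lt_one (by norm_num) (by norm_num)]
      _ = 1 / 3 := by norm_num
  · have g1 : Summable (fun n : ℕ => (4/9 : ℝ) * (4/9) ^ n) :=
      (summable_geometric_of_lt_one (by norm_num) (by norm_num)).mul_left _
    have g2 : Summable (fun n : ℕ => (8/9 : ℝ) * (2/9) ^ n) :=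
      (summable_geometric_of_lt_one (by norm_num) (by norm_num)).mul_left _
    have g3 : Summable (fun n : ℕ => (4/9 : ℝ) * (1/9) ^ n) :=
      (summable_geometric_of_lt_one (by norm_num) (by norm_num)).mul_left _
    have hs : Summable (fun n : ℕ => p (n + 1 + 1) 3 ^ 2) := by
      simp only [p3]
      exact (g1.sub g2).add g3
    have hs' : Summable (fun n : ℕ => p (n + 1) 3 ^ 2) :=
      (summable_nat_add_iff 1).mp hs
    rw [Summable.tsum_eq_zero_add hs']
    have h0 : p 1 3 ^ 2 = 0 := by simp [p, stirling]
    rw [h0, zero_add]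
    calc ∑' n : ℕ, p (n + 1 + 1) 3 ^ 2
        = ∑' n : ℕ, ((4/9 : ℝ) * (4/9) ^ n - (8/9) * (2/9) ^ n + (4/9) * (1/9) ^ n) :=
          tsum_congr fun n => p3 n
      _ = (∑' n : ℕ, ((4/9 : ℝ) * (4/9) ^ n - (8/9) * (2/9) ^ n))
            + ∑' n : ℕ, (4/9 : ℝ) * (1/9) ^ n := Summable.tsum_add (g1.sub g2) g3
      _ = ((∑' n : ℕ, (4/9 : ℝ) * (4/9) ^ n) - ∑' n : ℕ, (8/9 : ℝ) * (2/9) ^ n)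
            + ∑' n : ℕ, (4/9 : ℝ) * (1/9) ^ n := by rw [Summable.tsum_sub g1 g2]
      _ = ((4/9) * (1 - 4/9)⁻¹ - (8/9) * (1 - 2/9)⁻¹) + (4/9) * (1 - 1/9)⁻¹ := by
          rw [tsum_mul_left, tsum_mul_left, tsum_mul_left,
            tsum_geometric_of_lt_one (by norm_num) (by norm_num),
            tsum_geometric_of_lt_one (by norm_num) (by norm_num),
            tsum_geometric_of_lt_one (by norm_num) (by norm_num)]
      _ = 11 / 70 := by norm_num
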